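/- Let A be a unital C*-algebra containing elements u, v with u*u = v*v = uu* + vv* = 1 and u*v = v*u = 0, let n ≥ 2, and let T : Aⁿ → A^{n−1} be the bounded linear operator T(b₁,…,bₙ) = ([v,b_i] + [u,b_{i−1}])_{i=2}^{n}, where Aⁿ and A^{n−1} carry the supremum norm. Then there exists a bounded linear operator R : A^{n−1} → Aⁿ with T ∘ R = id and ‖R c‖ ≤ 8√2·n²·‖c‖ for all c ∈ A^{n−1}. -/

import Mathlib

noncomputable section AuxRightInv

private def grW (N i : ℕ) : ℝ := 2 - ((2*(i:ℝ) - (N:ℝ) + 1)/(N:ℝ))^2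
private def wtW (N i : ℕ) : ℝ := Real.sqrt (grW N i)

private lemma grW_ge_one {N i : ℕ} (hi : i < N) : 1 ≤ grW N i := by
  have hM : (1:ℝ) ≤ (N:ℝ) := by exact_mod_cast (by omega : 1 ≤ N)
  have hiM : (i:ℝ) + 1 ≤ (N:ℝ) := by exact_mod_cast hi
  have hi0 : (0:ℝ) ≤ (i:ℝ) := Nat.cast_nonneg i
  have hM2 : (0:ℝ) < (N:ℝ)^2 := by positivity
  have key : ((2*(i:ℝ) - (N:ℝ) + 1)/(N:ℝ))^2 ≤ 1 := by
    rw [div_pow, div_le_one hM2]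
    nlinarith
  unfold grW; linarith

private lemma grW_eq (N i : ℕ) (hN : (N:ℝ) ≠ 0) :
    grW N i = (2*(N:ℝ)^2 - (2*(i:ℝ) - (N:ℝ) + 1)^2)/(N:ℝ)^2 := by
  unfold grW; field_simp

private lemma grW_main {N i : ℕ} (hi : i < N) :
    (if i = 0 then 0 else grW N (i-1)) + (if i + 1 < N then grW N (i+1) else 0)
      ≤ (2 - 2/(N:ℝ)^2) * grW N i := by
  have hM1 : (1:ℝ) ≤ (N:ℝ) := by exact_mod_cast (by omega : 1 ≤ N)
  have hM0 : (N:ℝ) ≠ 0 := by linarith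
  have hM2 : (0:ℝ) < (N:ℝ)^2 := by positivity
  have hiM : (i:ℝ) + 1 ≤ (N:ℝ) := by exact_mod_cast hi
  have hi0 : (0:ℝ) ≤ (i:ℝ) := Nat.cast_nonneg i
  have hco : 2 - 2/(N:ℝ)^2 = (2*(N:ℝ)^2 - 2)/(N:ℝ)^2 := by field_simp
  by_cases h0 : i = 0
  · subst h0
    by_cases h1 : 0 + 1 < N
    · have hM : (2:ℝ) ≤ (N:ℝ) := by exact_mod_cast h1
      simp only [reduceIte, if_pos h1, zero_add]
      rw [grW_eq N 1 hM0, grW_eq N 0 hM0, hco, div_mul_div_comm,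
        div_le_div_iff₀ hM2 (by positivity)]
      push_cast
      nlinarith [sq_nonneg ((N:ℝ)^2 - (N:ℝ)), sq_nonneg (2*(N:ℝ) - 1), sq_nonneg (N:ℝ)]
    · have hN1 : N = 1 := by omega
      subst hN1
      norm_num [grW]
  · by_cases h1 : i + 1 < N
    · have hi1 : (1:ℝ) ≤ (i:ℝ) := by exact_mod_cast (by omega : 1 ≤ i)
      have hcast : ((i - 1 : ℕ) : ℝ) = (i:ℝ) - 1 := by
        have : 1 ≤ i := by omega
        push_cast [this]; ring
      simp only [if_neg h0, if_pos h1]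
      rw [grW_eq N (i-1) hM0, grW_eq N (i+1) hM0, grW_eq N i hM0, hco,
        ← add_div, div_mul_div_comm, div_le_div_iff₀ hM2 (by positivity), hcast]
      push_cast
      nlinarith [sq_nonneg (2*(i:ℝ) - (N:ℝ) + 1), sq_nonneg (N:ℝ), hM2]
    · have hiN : i + 1 = N := by omega
      have hM : (2:ℝ) ≤ (N:ℝ) := by exact_mod_cast (by omega : 2 ≤ N)
      have hcast : ((i - 1 : ℕ) : ℝ) = (i:ℝ) - 1 := by
        have : 1 ≤ i := by omega
        push_cast [this]; ring
      have hcast2 : (i:ℝ) = (N:ℝ) - 1 := by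
        have : ((i:ℝ) + 1) = (N:ℝ) := by exact_mod_cast hiN
        linarith
      simp only [if_neg h0, if_neg h1, add_zero]
      rw [grW_eq N (i-1) hM0, grW_eq N i hM0, hco, div_mul_div_comm,
        div_le_div_iff₀ hM2 (by positivity), hcast, hcast2]
      nlinarith [sq_nonneg ((N:ℝ)^2 - (N:ℝ)), sq_nonneg (2*(N:ℝ) - 1), sq_nonneg (N:ℝ)]

private lemma le_of_sq_le_sq' {a b : ℝ} (ha : 0 ≤ a) (hb : 0 ≤ b) (h : a^2 ≤ b^2) : a ≤ b := by
  nlinarith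

variable {A : Type*} [CStarAlgebra A]

private lemma aux_right (u v x y : A) (huu : star u * u = 1) (hvv : star v * v = 1)
    (huv : star u * v = 0) (hvu : star v * u = 0) :
    ‖x * star u + y * star v‖ ^ 2 ≤ ‖x‖ ^ 2 + ‖y‖ ^ 2 := by
  have hstar : star (x * star u + y * star v) = u * star x + v * star y := by
    simp [star_add, star_mul]
  have hprod : (x * star u + y * star v) * (u * star x + v * star y)
      = x * star x + y * star y := by
    have e : (x * star u + y * star v) * (u * star x + v * star y)
        = x * (star u * u) * star x + x * (star u * v) * star y
          + y * (star v * u) * star x + y * (star v * v) * star y := by noncomm_ring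
    rw [e, huu, hvv, huv, hvu]; simp
  have h1 : ‖x * star u + y * star v‖ ^ 2 = ‖x * star x + y * star y‖ := by
    rw [sq, ← CStarRing.norm_self_mul_star, hstar, hprod]
  rw [h1]
  calc ‖x * star x + y * star y‖ ≤ ‖x * star x‖ + ‖y * star y‖ := norm_add_le _ _
  _ = ‖x‖^2 + ‖y‖^2 := by
      rw [CStarRing.norm_self_mul_star, CStarRing.norm_self_mul_star, sq, sq]

private lemma aux_left (u v a b : A) (huu : star u * u = 1) (hvv : star v * v = 1)
    (huv : star u * v = 0) (hvu : star v * u = 0) :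
    ‖u * a + v * b‖ ^ 2 ≤ ‖a‖ ^ 2 + ‖b‖ ^ 2 := by
  have hstar : star (u * a + v * b) = star a * star u + star b * star v := by
    simp [star_add, star_mul]
  have hprod : (star a * star u + star b * star v) * (u * a + v * b)
      = star a * a + star b * b := by
    have e : (star a * star u + star b * star v) * (u * a + v * b)
        = star a * (star u * u) * a + star a * (star u * v) * b
          + star b * (star v * u) * a + star b * (star v * v) * b := by noncomm_ring
    rw [e, huu, hvv, huv, hvu]; simp
  have h1 : ‖u * a + v * b‖ ^ 2 = ‖star a * a + star b * b‖ := by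
    rw [sq, ← CStarRing.norm_star_mul_self, hstar, hprod]
  rw [h1]
  calc ‖star a * a + star b * b‖ ≤ ‖star a * a‖ + ‖star b * b‖ := norm_add_le _ _
  _ = ‖a‖^2 + ‖b‖^2 := by
      rw [CStarRing.norm_star_mul_self, CStarRing.norm_star_mul_self, sq, sq]

private lemma aux_key (u v p q r : A) (huu : star u * u = 1) (hvv : star v * v = 1)
    (huv : star u * v = 0) (hvu : star v * u = 0) :
    ‖u * p * star u + v * p * star v + u * r * star v + v * q * star u‖ ^ 2
      ≤ 2 * ‖p‖ ^ 2 + ‖q‖ ^ 2 + ‖r‖ ^ 2 := by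
  have e : u * p * star u + v * p * star v + u * r * star v + v * q * star u
      = (u * p + v * q) * star u + (u * r + v * p) * star v := by noncomm_ring
  rw [e]
  calc ‖(u * p + v * q) * star u + (u * r + v * p) * star v‖ ^ 2
      ≤ ‖u * p + v * q‖^2 + ‖u * r + v * p‖^2 := aux_right u v _ _ huu hvv huv hvu
  _ ≤ (‖p‖^2 + ‖q‖^2) + (‖r‖^2 + ‖p‖^2) :=
      add_le_add (aux_left u v _ _ huu hvv huv hvu) (aux_left u v _ _ huu hvv huv hvu)
  _ = 2*‖p‖^2 + ‖q‖^2 + ‖r‖^2 := by ring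

private def extwL (N : ℕ) (w : ℕ → ℝ) : (Fin N → A) →ₗ[ℂ] (ℕ → A) where
  toFun z m := if h : m < N then ((w m : ℂ)) • z ⟨m, h⟩ else 0
  map_add' z z' := by funext m; by_cases h : m < N <;> simp [h, smul_add]
  map_smul' c z := by funext m; by_cases h : m < N <;> simp [h, smul_comm c]

private def conjL (a b : A) : A →ₗ[ℂ] A :=
  (LinearMap.mulRight ℂ (star b)).comp (LinearMap.mulLeft ℂ a)

@[simp] private lemma conjL_apply (a b x : A) : conjL a b x = a * x * star b := rfl

private def evW (N : ℕ) (w : ℕ → ℝ) (m : ℕ) : (Fin N → A) →ₗ[ℂ] A :=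
  (LinearMap.proj m).comp (extwL N w)

@[simp] private lemma evW_apply (N : ℕ) (w : ℕ → ℝ) (m : ℕ) (z : Fin N → A) :
    evW N w m z = extwL N w z m := rfl

private def KmapL (u v : A) (N : ℕ) (w : ℕ → ℝ) : (Fin N → A) →ₗ[ℂ] (Fin N → A) :=
  LinearMap.pi fun i =>
    ((((2 * w (i:ℕ))⁻¹ : ℝ) : ℂ)) •
      ((conjL u u).comp (evW N w (i:ℕ)) + (conjL v v).comp (evW N w (i:ℕ))
        + (conjL u v).comp (if (i:ℕ) = 0 then 0 else evW N w ((i:ℕ) - 1))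
        + (conjL v u).comp (evW N w ((i:ℕ) + 1)))

private lemma KmapL_apply (u v : A) (N : ℕ) (w : ℕ → ℝ) (z : Fin N → A) (i : Fin N) :
    KmapL u v N w z i =
      ((((2 * w (i:ℕ))⁻¹ : ℝ) : ℂ)) •
        (u * extwL N w z (i:ℕ) * star u + v * extwL N w z (i:ℕ) * star v
          + u * (if (i:ℕ) = 0 then 0 else extwL N w z ((i:ℕ) - 1)) * star v
          + v * extwL N w z ((i:ℕ) + 1) * star u) := by
  by_cases h : (i:ℕ) = 0 <;>
    simp [KmapL, h, LinearMap.pi_apply]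

private def BmapL (u v : A) (n N : ℕ) (w : ℕ → ℝ) : (Fin N → A) →ₗ[ℂ] (Fin n → A) :=
  LinearMap.pi fun j =>
    - ((LinearMap.mulRight ℂ (star u)).comp (evW N w (j:ℕ))
       + (LinearMap.mulRight ℂ (star v)).comp
          (if (j:ℕ) = 0 then 0 else evW N w ((j:ℕ) - 1)))

private lemma BmapL_apply (u v : A) (n N : ℕ) (w : ℕ → ℝ) (y : Fin N → A) (j : Fin n) :
    BmapL u v n N w y j =
      - (extwL N w y (j:ℕ) * star u
         + (if (j:ℕ) = 0 then 0 else extwL N w y ((j:ℕ) - 1)) * star v) := by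
  by_cases h : (j:ℕ) = 0 <;>
    simp [BmapL, h, LinearMap.pi_apply]

private def HmapL (N : ℕ) (w : ℕ → ℝ) : (Fin N → A) →ₗ[ℂ] (Fin N → A) :=
  LinearMap.pi fun i =>
    ((((2 * w (i:ℕ))⁻¹ : ℝ) : ℂ)) • (LinearMap.proj i : (Fin N → A) →ₗ[ℂ] A)

@[simp] private lemma HmapL_apply (N : ℕ) (w : ℕ → ℝ) (c : Fin N → A) (i : Fin N) :
    HmapL N w c i = ((((2 * w (i:ℕ))⁻¹ : ℝ) : ℂ)) • c i := rfl

private lemma wtW_nonneg (N m : ℕ) : 0 ≤ wtW N m := Real.sqrt_nonneg _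

private lemma wtW_sq {N m : ℕ} (hm : m < N) : (wtW N m)^2 = grW N m :=
  Real.sq_sqrt (by linarith [grW_ge_one hm])

private lemma wtW_ge_one {N m : ℕ} (hm : m < N) : 1 ≤ wtW N m := by
  rw [show (1:ℝ) = Real.sqrt 1 by simp]
  exact Real.sqrt_le_sqrt (grW_ge_one hm)

private lemma norm_extwL_sq_le (N : ℕ) (z : Fin N → A) (m : ℕ) :
    ‖extwL N (wtW N) z m‖^2 ≤ (if m < N then grW N m else 0) * ‖z‖^2 := by
  by_cases h : m < N
  · simp only [extwL, LinearMap.coe_mk, AddHom.coe_mk, dif_pos h, if_pos h]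
    rw [norm_smul, Complex.norm_real, Real.norm_eq_abs, abs_of_nonneg (wtW_nonneg N m),
      mul_pow, wtW_sq h]
    have h1 : ‖z ⟨m, h⟩‖ ≤ ‖z‖ := norm_le_pi_norm z ⟨m, h⟩
    have h2 : 0 < grW N m := by linarith [grW_ge_one h]
    have h3 : ‖z ⟨m, h⟩‖^2 ≤ ‖z‖^2 := by
      nlinarith [norm_nonneg (z ⟨m, h⟩), norm_nonneg z]
    nlinarith
  · simp [extwL, h]

private lemma KmapL_bound (u v : A) (huu : star u * u = 1) (hvv : star v * v = 1)
    (huv : star u * v = 0) (hvu : star v * u = 0) (N : ℕ)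
    (z : Fin N → A) (i : Fin N) :
    ‖KmapL u v N (wtW N) z i‖ ≤ Real.sqrt (1 - 1/(2*(N:ℝ)^2)) * ‖z‖ := by
  have hN : 0 < N := i.pos
  have hM1 : (1:ℝ) ≤ (N:ℝ) := by exact_mod_cast hN
  have hM2 : (0:ℝ) < (N:ℝ)^2 := by positivity
  have ht0 : (0:ℝ) ≤ 1 - 1/(2*(N:ℝ)^2) := by
    have : 1/(2*(N:ℝ)^2) ≤ 1/2 := by
      apply div_le_div_of_nonneg_left <;> nlinarith
    linarith
  have hgi : 1 ≤ grW N (i:ℕ) := grW_ge_one i.isLt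
  have hgi0 : 0 < grW N (i:ℕ) := by linarith
  have hwi : 1 ≤ wtW N (i:ℕ) := wtW_ge_one i.isLt
  have hwi0 : 0 < wtW N (i:ℕ) := by linarith
  rw [KmapL_apply]
  rw [norm_smul, Complex.norm_real, Real.norm_eq_abs,
    abs_of_nonneg (by positivity : (0:ℝ) ≤ (2 * wtW N (i:ℕ))⁻¹)]
  have hb := aux_key u v (extwL N (wtW N) z (i:ℕ))
      (extwL N (wtW N) z ((i:ℕ) + 1))
      (if (i:ℕ) = 0 then 0 else extwL N (wtW N) z ((i:ℕ) - 1)) huu hvv huv hvu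
  have h1 : ‖extwL N (wtW N) z (i:ℕ)‖^2 ≤ grW N (i:ℕ) * ‖z‖^2 := by
    have := norm_extwL_sq_le N z (i:ℕ)
    rwa [if_pos i.isLt] at this
  have h2 : ‖extwL N (wtW N) z ((i:ℕ)+1)‖^2
      ≤ (if (i:ℕ)+1 < N then grW N ((i:ℕ)+1) else 0) * ‖z‖^2 :=
    norm_extwL_sq_le N z ((i:ℕ)+1)
  have h3 : ‖(if (i:ℕ) = 0 then 0 else extwL N (wtW N) z ((i:ℕ) - 1))‖^2
      ≤ (if (i:ℕ) = 0 then 0 else grW N ((i:ℕ)-1)) * ‖z‖^2 := by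
    by_cases h : (i:ℕ) = 0
    · simp [h]
    · simp only [if_neg h]
      have := norm_extwL_sq_le N z ((i:ℕ)-1)
      rwa [if_pos (by omega : (i:ℕ)-1 < N)] at this
  have hmain := grW_main i.isLt
  have hmain' := mul_le_mul_of_nonneg_right hmain (sq_nonneg ‖z‖)
  apply le_of_sq_le_sq' (by positivity) (by positivity)
  rw [mul_pow, mul_pow, Real.sq_sqrt ht0]
  have hcoef : ((2 * wtW N (i:ℕ))⁻¹)^2 = (4 * grW N (i:ℕ))⁻¹ := by
    rw [inv_pow, mul_pow, wtW_sq i.isLt]; norm_num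
  rw [hcoef, inv_mul_le_iff₀ (by positivity)]
  have hdist := add_mul (if (i:ℕ) = 0 then (0:ℝ) else grW N ((i:ℕ)-1))
      (if (i:ℕ)+1 < N then grW N ((i:ℕ)+1) else 0) (‖z‖^2)
  have hring : 4 * grW N (i:ℕ) * ((1 - 1/(2*(N:ℝ)^2)) * ‖z‖^2)
      = 2*(grW N (i:ℕ)*‖z‖^2) + (2 - 2/(N:ℝ)^2) * grW N (i:ℕ) * ‖z‖^2 := by ring
  linarith [hb, h1, h2, h3, hmain', hdist, hring]

end AuxRightInv

private lemma grW_le_two {N i : ℕ} : grW N i ≤ 2 := by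
  have : (0:ℝ) ≤ ((2*(i:ℝ) - (N:ℝ) + 1)/(N:ℝ))^2 := sq_nonneg _
  unfold grW; linarith


set_option maxHeartbeats 1000000 in
/-- Proposition 2.7.  Let `A` be a unital C*-algebra containing isometries `u, v` with
`u*u = v*v = uu* + vv* = 1`, `u*v = v*u = 0`, let `n ≥ 2` and let
`T : Aⁿ → A^{n-1}`, `T(b₁,…,bₙ) = ([v,bᵢ] + [u,bᵢ₋₁])_{i=2}^{n}` (sup norms on products,
which is the norm on Lean's pi types).  Then `T` has a bounded linear right inverse `R`
with `‖R c‖ ≤ 8√2·n²·‖c‖` for all `c`.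
(0-based indexing: the output coordinate `i : Fin (n-1)` corresponds to `i+2` in the
paper, and `b j` for `j : Fin n` corresponds to `b_{j+1}`.) -/
theorem right_inverse_of_commutator_map {A : Type*} [CStarAlgebra A] (u v : A)
    (huu : star u * u = 1) (hvv : star v * v = 1) (hsum : u * star u + v * star v = 1)
    (huv : star u * v = 0) (hvu : star v * u = 0)
    {n : ℕ} (hn : 2 ≤ n)
    (T : (Fin n → A) →L[ℂ] (Fin (n - 1) → A))
    (hT : ∀ (b : Fin n → A) (i : Fin (n - 1)),
      T b i =
        (v * b ⟨i.val + 1, by have := i.isLt; omega⟩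
            - b ⟨i.val + 1, by have := i.isLt; omega⟩ * v)
          + (u * b ⟨i.val, by have := i.isLt; omega⟩
              - b ⟨i.val, by have := i.isLt; omega⟩ * u)) :
    ∃ R : (Fin (n - 1) → A) →L[ℂ] (Fin n → A),
      (∀ c, T (R c) = c) ∧
      (∀ c, ‖R c‖ ≤ 8 * Real.sqrt 2 * (n : ℝ) ^ 2 * ‖c‖) := by
  classical
  have hN1 : 1 ≤ n - 1 := by omega
  set w : ℕ → ℝ := wtW (n-1) with hwdef
  set M : ℝ := ((n-1 : ℕ):ℝ) with hMdef
  have hM1 : (1:ℝ) ≤ M := by rw [hMdef]; exact_mod_cast hN1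
  have hM0 : M ≠ 0 := by linarith
  set θ : ℝ := Real.sqrt (1 - 1/(2*M^2)) with hθdef
  have ht0 : (0:ℝ) ≤ 1 - 1/(2*M^2) := by
    have h : 1/(2*M^2) ≤ 1/2 := by
      apply div_le_div_of_nonneg_left (by norm_num) (by norm_num)
      nlinarith
    linarith
  have hθ0 : 0 ≤ θ := Real.sqrt_nonneg _
  have hβ0 : (0:ℝ) ≤ 1 - 1/(4*M^2) := by
    have h : 1/(4*M^2) ≤ 1/4 := by
      apply div_le_div_of_nonneg_left (by norm_num) (by norm_num)
      nlinarith
    linarith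
  have hθβ : θ ≤ 1 - 1/(4*M^2) := by
    have hs : 1/(2*M^2) = 2 * (1/(4*M^2)) := by field_simp; ring
    have h : 1 - 1/(2*M^2) ≤ (1 - 1/(4*M^2))^2 := by
      rw [hs]; nlinarith [sq_nonneg (1/(4*M^2))]
    calc θ ≤ Real.sqrt ((1 - 1/(4*M^2))^2) := Real.sqrt_le_sqrt h
    _ = 1 - 1/(4*M^2) := Real.sqrt_sq hβ0
  have hθ1 : θ < 1 := by
    have : 0 < 1/(4*M^2) := by positivity
    linarith
  -- the contraction K as a continuous linear map
  have hKb : ∀ z : Fin (n-1) → A, ‖KmapL u v (n-1) w z‖ ≤ θ * ‖z‖ := by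
    intro z
    refine (pi_norm_le_iff_of_nonneg (by positivity)).2 fun i => ?_
    exact KmapL_bound u v huu hvv huv hvu (n-1) z i
  let Kc : (Fin (n-1) → A) →L[ℂ] (Fin (n-1) → A) := (KmapL u v (n-1) w).mkContinuous θ hKb
  have hKcb : ∀ z, ‖Kc z‖ ≤ θ * ‖z‖ := fun z => hKb z
  have hKnorm : ‖Kc‖ < 1 :=
    lt_of_le_of_lt (ContinuousLinearMap.opNorm_le_bound _ hθ0 hKcb) hθ1
  let U : ((Fin (n-1) → A) →L[ℂ] (Fin (n-1) → A))ˣ := Units.oneSub Kc hKnorm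
  let S : (Fin (n-1) → A) →L[ℂ] (Fin (n-1) → A) := ↑U⁻¹
  have hSmul : ((1 - Kc) * S) = 1 := U.mul_inv
  have hSpt : ∀ c, S c - Kc (S c) = c := by
    intro c
    have h := congrFun (congrArg DFunLike.coe hSmul) c
    simpa [ContinuousLinearMap.mul_apply, ContinuousLinearMap.sub_apply] using h
  have hSnorm : ∀ c, ‖S c‖ ≤ 4*M^2*‖c‖ := by
    intro c
    have h2 : S c = c + Kc (S c) := sub_eq_iff_eq_add.mp (hSpt c)
    have h1 : ‖S c‖ ≤ ‖c‖ + θ * ‖S c‖ := by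
      calc ‖S c‖ = ‖c + Kc (S c)‖ := by rw [← h2]
      _ ≤ ‖c‖ + ‖Kc (S c)‖ := norm_add_le _ _
      _ ≤ ‖c‖ + θ * ‖S c‖ := by linarith [hKcb (S c)]
    have h5 := mul_le_mul_of_nonneg_right hθβ (norm_nonneg (S c))
    have h3 : (1/(4*M^2)) * ‖S c‖ ≤ ‖c‖ := by nlinarith
    have h4 : (0:ℝ) < 4*M^2 := by positivity
    calc ‖S c‖ = (4*M^2) * ((1/(4*M^2)) * ‖S c‖) := by field_simp
    _ ≤ (4*M^2) * ‖c‖ := mul_le_mul_of_nonneg_left h3 (le_of_lt h4)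
  -- H
  have hHb : ∀ c : Fin (n-1) → A, ‖HmapL (n-1) w c‖ ≤ (1/2) * ‖c‖ := by
    intro c
    refine (pi_norm_le_iff_of_nonneg (by positivity)).2 fun i => ?_
    have hwi : 1 ≤ w (i:ℕ) := wtW_ge_one i.isLt
    rw [HmapL_apply, norm_smul, Complex.norm_real, Real.norm_eq_abs,
      abs_of_nonneg (inv_nonneg.mpr (by linarith : (0:ℝ) ≤ 2*w (i:ℕ)))]
    have h1 : (2*w (i:ℕ))⁻¹ ≤ 1/2 := by
      rw [show (1:ℝ)/2 = (2:ℝ)⁻¹ by norm_num]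
      apply inv_anti₀ (by norm_num)
      linarith
    have h2 : ‖c i‖ ≤ ‖c‖ := norm_le_pi_norm c i
    have h0 : (0:ℝ) ≤ (2*w (i:ℕ))⁻¹ := by positivity
    nlinarith [norm_nonneg (c i), norm_nonneg c]
  let Hc : (Fin (n-1) → A) →L[ℂ] (Fin (n-1) → A) := (HmapL (n-1) w).mkContinuous (1/2) hHb
  -- B
  have hBpt : ∀ (y : Fin (n-1) → A) (j : Fin n), ‖BmapL u v n (n-1) w y j‖ ≤ 2 * ‖y‖ := by
    intro y j
    rw [BmapL_apply, norm_neg]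
    apply le_of_sq_le_sq' (norm_nonneg _) (by positivity)
    have hb := aux_right u v (extwL (n-1) w y (j:ℕ))
        (if (j:ℕ) = 0 then 0 else extwL (n-1) w y ((j:ℕ) - 1)) huu hvv huv hvu
    have h1 : ‖extwL (n-1) w y (j:ℕ)‖^2 ≤ 2 * ‖y‖^2 := by
      have h := norm_extwL_sq_le (n-1) y (j:ℕ)
      have h' : (if (j:ℕ) < n-1 then grW (n-1) (j:ℕ) else 0) ≤ 2 := by
        split
        · exact grW_le_two
        · norm_num
      nlinarith [sq_nonneg ‖y‖]
    have h2 : ‖(if (j:ℕ) = 0 then 0 else extwL (n-1) w y ((j:ℕ) - 1))‖^2 ≤ 2 * ‖y‖^2 := by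
      by_cases h : (j:ℕ) = 0
      · simp [h]
      · simp only [if_neg h]
        have hh := norm_extwL_sq_le (n-1) y ((j:ℕ)-1)
        have h' : (if (j:ℕ)-1 < n-1 then grW (n-1) ((j:ℕ)-1) else 0) ≤ 2 := by
          split
          · exact grW_le_two
          · norm_num
        nlinarith [sq_nonneg ‖y‖]
    have hring : (2*‖y‖)^2 = 4*‖y‖^2 := by ring
    linarith
  let Bc : (Fin (n-1) → A) →L[ℂ] (Fin n → A) :=
    (BmapL u v n (n-1) w).mkContinuous 2
      (fun y => (pi_norm_le_iff_of_nonneg (by positivity)).2 (hBpt y))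
  refine ⟨Bc.comp (S.comp Hc), ?_, ?_⟩
  · -- exactness
    intro c
    funext i
    set y : Fin (n-1) → A := S (Hc c) with hy
    have hRc : (Bc.comp (S.comp Hc)) c = BmapL u v n (n-1) w y := rfl
    -- the key relation at coordinate i
    have hwne : (2 * w (i:ℕ) : ℝ) ≠ 0 := by
      have := wtW_ge_one i.isLt; intro h; nlinarith
    have hcancel : ∀ x : A, ((2*w (i:ℕ):ℝ):ℂ) • ((((2*w (i:ℕ))⁻¹:ℝ)):ℂ) • x = x := by
      intro x
      rw [smul_smul, ← Complex.ofReal_mul, mul_inv_cancel₀ hwne, Complex.ofReal_one, one_smul]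
    have hzfi : extwL (n-1) w y (i:ℕ) = ((w (i:ℕ):ℝ):ℂ) • y i := by
      simp only [extwL, LinearMap.coe_mk, AddHom.coe_mk, dif_pos i.isLt, Fin.eta]
    have hsy : ((2*w (i:ℕ):ℝ):ℂ) • y i
        = extwL (n-1) w y (i:ℕ) + extwL (n-1) w y (i:ℕ) := by
      rw [hzfi, show ((2*w (i:ℕ):ℝ):ℂ) = (2:ℂ)*((w (i:ℕ):ℝ):ℂ) by push_cast; ring,
        mul_smul, two_smul]
    have hrel := hSpt (Hc c)
    have hreli := congrFun hrel i
    rw [Pi.sub_apply] at hreli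
    have hKy : Kc y i = ((((2 * w (i:ℕ))⁻¹ : ℝ) : ℂ)) •
        (u * extwL (n-1) w y (i:ℕ) * star u + v * extwL (n-1) w y (i:ℕ) * star v
          + u * (if (i:ℕ) = 0 then 0 else extwL (n-1) w y ((i:ℕ) - 1)) * star v
          + v * extwL (n-1) w y ((i:ℕ) + 1) * star u) := KmapL_apply u v (n-1) w y i
    have hHi : Hc c i = ((((2 * w (i:ℕ))⁻¹ : ℝ) : ℂ)) • c i := rfl
    have h3 := congrArg (fun x : A => ((2*w (i:ℕ):ℝ):ℂ) • x) hreli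
    simp only [smul_sub] at h3
    rw [hKy, hcancel, hHi, hcancel, hsy] at h3
    have hci : c i = (extwL (n-1) w y (i:ℕ) + extwL (n-1) w y (i:ℕ))
        - (u * extwL (n-1) w y (i:ℕ) * star u + v * extwL (n-1) w y (i:ℕ) * star v
          + u * (if (i:ℕ) = 0 then 0 else extwL (n-1) w y ((i:ℕ) - 1)) * star v
          + v * extwL (n-1) w y ((i:ℕ) + 1) * star u) := h3.symm
    rw [hT, hRc, BmapL_apply, BmapL_apply, hci]
    simp only [Fin.val_mk, Nat.succ_ne_zero, if_neg, Nat.add_sub_cancel]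
    simp only [neg_add, mul_neg, neg_mul, neg_neg, sub_neg_eq_add, mul_add, add_mul,
      mul_assoc, huu, hvv, huv, hvu, mul_one, mul_zero, zero_mul, add_zero, zero_add,
      sub_eq_add_neg, neg_add_rev]
    by_cases hi0 : (i:ℕ) = 0 <;> simp only [hi0, ↓reduceIte] <;> abel
  · -- norm bound
    intro c
    have h1 : ‖(Bc.comp (S.comp Hc)) c‖ ≤ 2 * ‖S (Hc c)‖ :=
      (pi_norm_le_iff_of_nonneg (by positivity)).2 (fun j => hBpt (S (Hc c)) j)
    have h2 : ‖S (Hc c)‖ ≤ 4*M^2*‖Hc c‖ := hSnorm _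
    have h3 : ‖Hc c‖ ≤ (1/2) * ‖c‖ := hHb c
    have h4 : ‖(Bc.comp (S.comp Hc)) c‖ ≤ 4*M^2*‖c‖ := by
      have h5 := mul_le_mul_of_nonneg_left h3 (by positivity : (0:ℝ) ≤ 4*M^2)
      calc ‖(Bc.comp (S.comp Hc)) c‖ ≤ 2 * ‖S (Hc c)‖ := h1
      _ ≤ 2*(4*M^2*‖Hc c‖) := by linarith
      _ ≤ 2*(4*M^2*((1/2) * ‖c‖)) := by linarith
      _ = 4*M^2*‖c‖ := by ring
    have hs2 : (1:ℝ) ≤ Real.sqrt 2 := by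
      rw [show (1:ℝ) = Real.sqrt 1 by simp]
      exact Real.sqrt_le_sqrt (by norm_num)
    have hMn : M ≤ (n:ℝ) := by rw [hMdef]; exact_mod_cast Nat.sub_le n 1
    have hfin : 4*M^2*‖c‖ ≤ 8 * Real.sqrt 2 * (n:ℝ)^2 * ‖c‖ := by
      have hMsq : M^2 ≤ (n:ℝ)^2 := by nlinarith
      have : 4*M^2 ≤ 8 * Real.sqrt 2 * (n:ℝ)^2 := by nlinarith
      exact mul_le_mul_of_nonneg_right this (norm_nonneg c)
    linarith
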